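/- Let W_d ⊂ W(0,T) be a finite dimensional subspace, y ∈ W(0,T) the solution of b(y,v) = l(v) for all v ∈ W(0,T), and y_d ∈ W_d the solution of b(y_d,v_d) = l(v_d) for all v_d ∈ W_d. Then there is a constant c > 0, independent of the discretization, such that the error e := y − y_d satisfies the a priori estimate ‖e‖_{W(0,T)} + ‖e(T)‖_H ≤ c · inf_{v_d ∈ W_d} ‖y − v_d‖_{W(0,T)}. -/

import Mathlib

/-!
Abstract setup for the least-squares space-time formulation of the abstract
parabolic (heat) equation, following Hinze–Kahle.

* `V, H` are separable real Hilbert spaces forming a Gelfand triple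
  `V ↪ H ≡ H* ↪ V*` via the embedding `ι : V →L[ℝ] H`.
* `A : V → V*` is linear, bounded, selfadjoint, coercive and boundedly
  invertible with inverse the Riesz lift `R : V* → V`, i.e.
  `⟨l,v⟩_{V*,V} = (R l, v)_V`.  The dual inner product is
  `(l,k)_{V*} = (R l, R k)_V`.
* `W` is the space `W(0,T) = {v ∈ L²(0,T;V) : vₜ ∈ L²(0,T;V*)}`; an element
  `w : W` has an `L²(0,T;V)`-representative `val w : ℝ → V` (whose composition
  with `ι` is the continuous `H`-valued representative) and a weak time
  derivative `dt w : ℝ → V*`.  The `W(0,T)`-inner product is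
  `(u,w) = ∫₀ᵀ (uₜ,wₜ)_{V*} + ∫₀ᵀ (u,w)_V`, the embedding
  `W(0,T) ↪ C([0,T];H)` is continuous, and the fundamental
  integration-by-parts identity
  `‖w(T)‖²_H - ‖w(0)‖²_H = 2∫₀ᵀ ⟨wₜ,w⟩` holds.
-/

open MeasureTheory
open scoped RealInnerProductSpace

noncomputable section

structure SpaceTimeSetup (V H W : Type*)
    [NormedAddCommGroup V] [InnerProductSpace ℝ V] [CompleteSpace V]
    [NormedAddCommGroup H] [InnerProductSpace ℝ H] [CompleteSpace H]
    [NormedAddCommGroup W] [InnerProductSpace ℝ W] [CompleteSpace W] where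
  /-- the final time `T > 0` -/
  T : ℝ
  T_pos : 0 < T
  /-- the embedding `V ↪ H` of the Gelfand triple -/
  ι : V →L[ℝ] H
  ι_inj : Function.Injective ι
  /-- the operator `A : V → V*` -/
  A : V →L[ℝ] StrongDual ℝ V
  /-- the Riesz lift `R = A⁻¹ : V* → V` -/
  R : StrongDual ℝ V →L[ℝ] V
  /-- `⟨l,v⟩_{V*,V} = (R l, v)_V` -/
  riesz : ∀ (l : StrongDual ℝ V) (v : V), l v = ⟪R l, v⟫
  R_A : ∀ v : V, R (A v) = v
  A_R : ∀ l : StrongDual ℝ V, A (R l) = l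
  /-- the `L²(0,T;V)`-representative of an element of `W(0,T)` -/
  val : W →ₗ[ℝ] (ℝ → V)
  /-- the weak time derivative, an element of `L²(0,T;V*)` -/
  dt : W →ₗ[ℝ] (ℝ → StrongDual ℝ V)
  int_val : ∀ u w : W, IntervalIntegrable (fun t => ⟪val u t, val w t⟫) volume 0 T
  int_dt : ∀ u w : W,
    IntervalIntegrable (fun t => ⟪R (dt u t), R (dt w t)⟫) volume 0 T
  int_mix : ∀ u w : W, IntervalIntegrable (fun t => dt u t (val w t)) volume 0 T
  /-- the canonical inner product of `W(0,T)` -/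
  inner_def : ∀ u w : W, ⟪u, w⟫ =
    (∫ t in (0:ℝ)..T, ⟪R (dt u t), R (dt w t)⟫) +
      ∫ t in (0:ℝ)..T, ⟪val u t, val w t⟫
  /-- the continuous embedding `W(0,T) ↪ C([0,T];H)` -/
  emb : ∃ C > 0, ∀ (w : W) (t : ℝ), t ∈ Set.Icc 0 T → ‖ι (val w t)‖ ≤ C * ‖w‖
  /-- `‖w(T)‖²_H - ‖w(0)‖²_H = 2 ∫₀ᵀ ⟨wₜ, w⟩_{V*,V}` -/
  ftc : ∀ w : W, ‖ι (val w T)‖ ^ 2 - ‖ι (val w 0)‖ ^ 2 =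
    2 * ∫ t in (0:ℝ)..T, dt w t (val w t)

variable {V H W : Type*}
    [NormedAddCommGroup V] [InnerProductSpace ℝ V] [CompleteSpace V]
    [NormedAddCommGroup H] [InnerProductSpace ℝ H] [CompleteSpace H]
    [NormedAddCommGroup W] [InnerProductSpace ℝ W] [CompleteSpace W]

/-- the least-squares bilinear form
`b(v,w) = ∫₀ᵀ (vₜ + A v, wₜ + A w)_{V*} + (v(0), w(0))_H` -/
def SpaceTimeSetup.b (S : SpaceTimeSetup V H W) (v w : W) : ℝ :=
  (∫ t in (0:ℝ)..S.T,
      ⟪S.R (S.dt v t + S.A (S.val v t)), S.R (S.dt w t + S.A (S.val w t))⟫) +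
    ⟪S.ι (S.val v 0), S.ι (S.val w 0)⟫

/-- the right-hand side linear form
`l(v) = ∫₀ᵀ (f, vₜ + A v)_{V*} + (y₀, v(0))_H` -/
def SpaceTimeSetup.lform (S : SpaceTimeSetup V H W)
    (f : ℝ → StrongDual ℝ V) (y₀ : H) (v : W) : ℝ :=
  (∫ t in (0:ℝ)..S.T, ⟪S.R (f t), S.R (S.dt v t + S.A (S.val v t))⟫) +
    ⟪y₀, S.ι (S.val v 0)⟫


namespace SpaceTimeSetup

variable (S : SpaceTimeSetup V H W)

lemma b_expand (v w : W) : S.b v w =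
    (∫ t in (0:ℝ)..S.T, ⟪S.R (S.dt v t), S.R (S.dt w t)⟫) +
    (∫ t in (0:ℝ)..S.T, S.dt v t (S.val w t)) +
    (∫ t in (0:ℝ)..S.T, S.dt w t (S.val v t)) +
    (∫ t in (0:ℝ)..S.T, ⟪S.val v t, S.val w t⟫) +
    ⟪S.ι (S.val v 0), S.ι (S.val w 0)⟫ := by
  have h : ∀ t : ℝ, ⟪S.R (S.dt v t + S.A (S.val v t)), S.R (S.dt w t + S.A (S.val w t))⟫ =
      ⟪S.R (S.dt v t), S.R (S.dt w t)⟫ + S.dt v t (S.val w t) +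
      S.dt w t (S.val v t) + ⟪S.val v t, S.val w t⟫ := by
    intro t
    rw [map_add, map_add, inner_add_left, inner_add_right, inner_add_right,
      S.R_A, S.R_A, S.riesz (S.dt v t) (S.val w t),
      S.riesz (S.dt w t) (S.val v t), real_inner_comm (S.val v t) (S.R (S.dt w t))]
    ring
  unfold b
  rw [intervalIntegral.integral_congr (g := fun t =>
      ⟪S.R (S.dt v t), S.R (S.dt w t)⟫ + S.dt v t (S.val w t) +
      S.dt w t (S.val v t) + ⟪S.val v t, S.val w t⟫) (fun t _ => h t)]
  rw [intervalIntegral.integral_add (((S.int_dt v w).add (S.int_mix v w)).add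
        (S.int_mix w v)) (S.int_val v w),
      intervalIntegral.integral_add ((S.int_dt v w).add (S.int_mix v w)) (S.int_mix w v),
      intervalIntegral.integral_add (S.int_dt v w) (S.int_mix v w)]

lemma b_self (v : W) : S.b v v = ‖v‖ ^ 2 + ‖S.ι (S.val v S.T)‖ ^ 2 := by
  have h1 := S.ftc v
  have h2 := S.inner_def v v
  have h3 : ⟪v, v⟫ = ‖v‖ ^ 2 := real_inner_self_eq_norm_sq v
  have h4 : ⟪S.ι (S.val v 0), S.ι (S.val v 0)⟫ = ‖S.ι (S.val v 0)‖ ^ 2 :=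
    real_inner_self_eq_norm_sq _
  rw [S.b_expand v v, h4]
  linarith

lemma b_symm (v w : W) : S.b v w = S.b w v := by
  rw [S.b_expand v w, S.b_expand w v]
  rw [intervalIntegral.integral_congr
      (g := fun t => ⟪S.R (S.dt w t), S.R (S.dt v t)⟫)
      (fun t _ => real_inner_comm _ _),
    intervalIntegral.integral_congr (f := fun t => ⟪S.val v t, S.val w t⟫)
      (g := fun t => ⟪S.val w t, S.val v t⟫)
      (fun t _ => real_inner_comm _ _),
    real_inner_comm (S.ι (S.val v 0))]
  ring

lemma b_add_left (u v w : W) : S.b (u + v) w = S.b u w + S.b v w := by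
  have hval : ∀ t, S.val (u + v) t = S.val u t + S.val v t := by
    intro t; rw [map_add]; rfl
  have hdt : ∀ t, S.dt (u + v) t = S.dt u t + S.dt v t := by
    intro t; rw [map_add]; rfl
  rw [S.b_expand (u + v) w, S.b_expand u w, S.b_expand v w]
  have e1 : (∫ t in (0:ℝ)..S.T, ⟪S.R (S.dt (u + v) t), S.R (S.dt w t)⟫) =
      (∫ t in (0:ℝ)..S.T, ⟪S.R (S.dt u t), S.R (S.dt w t)⟫) +
      (∫ t in (0:ℝ)..S.T, ⟪S.R (S.dt v t), S.R (S.dt w t)⟫) := by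
    rw [← intervalIntegral.integral_add (S.int_dt u w) (S.int_dt v w)]
    refine intervalIntegral.integral_congr fun t _ => ?_
    rw [hdt, map_add, inner_add_left]
  have e2 : (∫ t in (0:ℝ)..S.T, S.dt (u + v) t (S.val w t)) =
      (∫ t in (0:ℝ)..S.T, S.dt u t (S.val w t)) +
      (∫ t in (0:ℝ)..S.T, S.dt v t (S.val w t)) := by
    rw [← intervalIntegral.integral_add (S.int_mix u w) (S.int_mix v w)]
    refine intervalIntegral.integral_congr fun t _ => ?_
    rw [hdt]; rfl
  have e3 : (∫ t in (0:ℝ)..S.T, S.dt w t (S.val (u + v) t)) =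
      (∫ t in (0:ℝ)..S.T, S.dt w t (S.val u t)) +
      (∫ t in (0:ℝ)..S.T, S.dt w t (S.val v t)) := by
    rw [← intervalIntegral.integral_add (S.int_mix w u) (S.int_mix w v)]
    refine intervalIntegral.integral_congr fun t _ => ?_
    rw [hval, map_add]
  have e4 : (∫ t in (0:ℝ)..S.T, ⟪S.val (u + v) t, S.val w t⟫) =
      (∫ t in (0:ℝ)..S.T, ⟪S.val u t, S.val w t⟫) +
      (∫ t in (0:ℝ)..S.T, ⟪S.val v t, S.val w t⟫) := by
    rw [← intervalIntegral.integral_add (S.int_val u w) (S.int_val v w)]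
    refine intervalIntegral.integral_congr fun t _ => ?_
    rw [hval, inner_add_left]
  rw [e1, e2, e3, e4, hval 0, map_add, inner_add_left]
  ring

lemma b_smul_left (c : ℝ) (v w : W) : S.b (c • v) w = c * S.b v w := by
  have hval : ∀ t, S.val (c • v) t = c • S.val v t := by
    intro t; rw [LinearMap.map_smul]; rfl
  have hdt : ∀ t, S.dt (c • v) t = c • S.dt v t := by
    intro t; rw [LinearMap.map_smul]; rfl
  rw [S.b_expand (c • v) w, S.b_expand v w]
  have e1 : (∫ t in (0:ℝ)..S.T, ⟪S.R (S.dt (c • v) t), S.R (S.dt w t)⟫) =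
      c * ∫ t in (0:ℝ)..S.T, ⟪S.R (S.dt v t), S.R (S.dt w t)⟫ := by
    rw [← intervalIntegral.integral_const_mul]
    refine intervalIntegral.integral_congr fun t _ => ?_
    rw [hdt, ContinuousLinearMap.map_smul, real_inner_smul_left]
  have e2 : (∫ t in (0:ℝ)..S.T, S.dt (c • v) t (S.val w t)) =
      c * ∫ t in (0:ℝ)..S.T, S.dt v t (S.val w t) := by
    rw [← intervalIntegral.integral_const_mul]
    refine intervalIntegral.integral_congr fun t _ => ?_
    rw [hdt]; rfl
  have e3 : (∫ t in (0:ℝ)..S.T, S.dt w t (S.val (c • v) t)) =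
      c * ∫ t in (0:ℝ)..S.T, S.dt w t (S.val v t) := by
    rw [← intervalIntegral.integral_const_mul]
    refine intervalIntegral.integral_congr fun t _ => ?_
    rw [hval, ContinuousLinearMap.map_smul]; rfl
  have e4 : (∫ t in (0:ℝ)..S.T, ⟪S.val (c • v) t, S.val w t⟫) =
      c * ∫ t in (0:ℝ)..S.T, ⟪S.val v t, S.val w t⟫ := by
    rw [← intervalIntegral.integral_const_mul]
    refine intervalIntegral.integral_congr fun t _ => ?_
    rw [hval, real_inner_smul_left]
  rw [e1, e2, e3, e4, hval 0, ContinuousLinearMap.map_smul, real_inner_smul_left]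
  ring

lemma b_sub_left (u v w : W) : S.b (u - v) w = S.b u w - S.b v w := by
  have : u - v = u + (-1 : ℝ) • v := by simp [sub_eq_add_neg]
  rw [this, S.b_add_left, S.b_smul_left]
  ring

lemma b_add_right (u v w : W) : S.b u (v + w) = S.b u v + S.b u w := by
  rw [S.b_symm u (v + w), S.b_add_left, S.b_symm v u, S.b_symm w u]

lemma b_self_nonneg (v : W) : 0 ≤ S.b v v := by
  rw [S.b_self]; positivity

/-- Cauchy–Schwarz for the bilinear form `b`. -/
lemma b_cauchy (v w : W) :
    S.b v w ≤ Real.sqrt (S.b v v) * Real.sqrt (S.b w w) := by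
  have key : ∀ lam : ℝ, 0 ≤ S.b v v + 2 * lam * S.b v w + lam ^ 2 * S.b w w := by
    intro lam
    have h0 := S.b_self_nonneg (v + lam • w)
    have : S.b (v + lam • w) (v + lam • w) =
        S.b v v + 2 * lam * S.b v w + lam ^ 2 * S.b w w := by
      rw [S.b_add_left, S.b_add_right, S.b_add_right, S.b_symm v (lam • w),
        S.b_smul_left lam w v, S.b_smul_left lam w (lam • w),
        S.b_symm w (lam • w), S.b_smul_left lam w w, S.b_symm w v]
      ring
    linarith [this ▸ h0]
  have hsq : (S.b v w) ^ 2 ≤ S.b v v * S.b w w := by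
    rcases eq_or_lt_of_le (S.b_self_nonneg w) with hw | hw
    · have hbvw : S.b v w = 0 := by
        by_contra hne
        have hk := key (-(S.b v v + 1) / (2 * S.b v w))
        rw [← hw] at hk
        have hl : 2 * (-(S.b v v + 1) / (2 * S.b v w)) * S.b v w
            = -(S.b v v + 1) := by field_simp
        linarith [hk, hl]
      rw [hbvw, ← hw]; ring_nf; exact le_refl 0
    · have hw' : S.b w w ≠ 0 := ne_of_gt hw
      have hk := key (-(S.b v w) / S.b w w)
      have h2 : 0 ≤ (S.b v v + 2 * (-(S.b v w) / S.b w w) * S.b v w +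
          (-(S.b v w) / S.b w w) ^ 2 * S.b w w) * S.b w w :=
        mul_nonneg hk hw.le
      have hd : (S.b v v + 2 * (-(S.b v w) / S.b w w) * S.b v w +
          (-(S.b v w) / S.b w w) ^ 2 * S.b w w) * S.b w w =
          S.b v v * S.b w w - (S.b v w) ^ 2 := by
        field_simp
        ring
      linarith [hd ▸ h2]
  calc S.b v w ≤ |S.b v w| := le_abs_self _
    _ = Real.sqrt ((S.b v w) ^ 2) := (Real.sqrt_sq_eq_abs _).symm
    _ ≤ Real.sqrt (S.b v v * S.b w w) := Real.sqrt_le_sqrt hsq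
    _ = Real.sqrt (S.b v v) * Real.sqrt (S.b w w) :=
        Real.sqrt_mul (S.b_self_nonneg v) _

end SpaceTimeSetup

/-- a priori estimate: there is a constant `c > 0`,
independent of the discretization, such that for every finite dimensional
subspace `W_d ⊂ W(0,T)`, the solution `y` of `b(y,v) = l(v)` on `W(0,T)`
and the Galerkin solution `y_d ∈ W_d` satisfy
`‖e‖_{W(0,T)} + ‖e(T)‖_H ≤ c · inf_{v_d ∈ W_d} ‖y - v_d‖_{W(0,T)}`
for the error `e = y - y_d`. -/

theorem apriori_estimate (S : SpaceTimeSetup V H W)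
    (f : ℝ → StrongDual ℝ V) (y₀ : H) :
    ∃ c > 0, ∀ Wd : Submodule ℝ W, FiniteDimensional ℝ Wd →
      ∀ y yd : W, (∀ v : W, S.b y v = S.lform f y₀ v) →
        yd ∈ Wd → (∀ vd ∈ Wd, S.b yd vd = S.lform f y₀ vd) →
        ‖y - yd‖ + ‖S.ι (S.val (y - yd) S.T)‖ ≤
          c * ⨅ vd : Wd, ‖y - (vd : W)‖ := by
  obtain ⟨C, hC, hemb⟩ := S.emb
  refine ⟨Real.sqrt 2 * Real.sqrt (1 + C ^ 2), by positivity, ?_⟩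
  intro Wd _ y yd hy hydmem hyd
  set e := y - yd with he
  -- Galerkin orthogonality
  have horth : ∀ vd ∈ Wd, S.b e vd = 0 := by
    intro vd hvd
    rw [he, S.b_sub_left, hy vd, hyd vd hvd, sub_self]
  -- quasi-best-approximation for each vd
  have hbound : ∀ vd : Wd,
      ‖e‖ + ‖S.ι (S.val e S.T)‖ ≤
        Real.sqrt 2 * Real.sqrt (1 + C ^ 2) * ‖y - (vd : W)‖ := by
    intro vd
    set w := y - (vd : W) with hw
    have hsplit : w = e + (yd - (vd : W)) := by rw [hw, he]; abel
    have hmem : yd - (vd : W) ∈ Wd := Wd.sub_mem hydmem vd.2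
    have hee : S.b e e = S.b e w := by
      rw [hsplit, S.b_add_right, horth _ hmem, add_zero]
    -- bound on b w w
    have hT : S.T ∈ Set.Icc (0:ℝ) S.T := ⟨le_of_lt S.T_pos, le_refl _⟩
    have hwT : ‖S.ι (S.val w S.T)‖ ≤ C * ‖w‖ := hemb w S.T hT
    have hbww : S.b w w ≤ (1 + C ^ 2) * ‖w‖ ^ 2 := by
      rw [S.b_self]
      nlinarith [norm_nonneg (S.ι (S.val w S.T)), norm_nonneg w]
    have hsbww : Real.sqrt (S.b w w) ≤ Real.sqrt (1 + C ^ 2) * ‖w‖ := by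
      calc Real.sqrt (S.b w w) ≤ Real.sqrt ((1 + C ^ 2) * ‖w‖ ^ 2) :=
            Real.sqrt_le_sqrt hbww
        _ = Real.sqrt (1 + C ^ 2) * ‖w‖ := by
            rw [Real.sqrt_mul (by positivity), Real.sqrt_sq (norm_nonneg w)]
    -- s := sqrt (b e e)
    set s := Real.sqrt (S.b e e) with hs
    have hs_nonneg : 0 ≤ s := Real.sqrt_nonneg _
    have hs_sq : s ^ 2 = S.b e e := Real.sq_sqrt (S.b_self_nonneg e)
    have hstep : s ^ 2 ≤ s * (Real.sqrt (1 + C ^ 2) * ‖w‖) := by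
      rw [hs_sq, hee]
      calc S.b e w ≤ Real.sqrt (S.b e e) * Real.sqrt (S.b w w) := S.b_cauchy e w
        _ ≤ s * (Real.sqrt (1 + C ^ 2) * ‖w‖) := by
            rw [← hs]
            exact mul_le_mul_of_nonneg_left hsbww hs_nonneg
    have hsle : s ≤ Real.sqrt (1 + C ^ 2) * ‖w‖ := by
      rcases eq_or_lt_of_le hs_nonneg with h0 | h0
      · rw [← h0]; positivity
      · nlinarith
    -- sum of norms vs sqrt 2 * s
    have hsum : ‖e‖ + ‖S.ι (S.val e S.T)‖ ≤ Real.sqrt 2 * s := by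
      have h1 : ‖e‖ ^ 2 + ‖S.ι (S.val e S.T)‖ ^ 2 = s ^ 2 := by
        rw [hs_sq, S.b_self]
      have h2 : (‖e‖ + ‖S.ι (S.val e S.T)‖) ^ 2 ≤ 2 * s ^ 2 := by
        nlinarith [sq_nonneg (‖e‖ - ‖S.ι (S.val e S.T)‖)]
      calc ‖e‖ + ‖S.ι (S.val e S.T)‖
          = Real.sqrt ((‖e‖ + ‖S.ι (S.val e S.T)‖) ^ 2) :=
            (Real.sqrt_sq (by positivity)).symm
        _ ≤ Real.sqrt (2 * s ^ 2) := Real.sqrt_le_sqrt h2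
        _ = Real.sqrt 2 * s := by
            rw [Real.sqrt_mul (by norm_num), Real.sqrt_sq hs_nonneg]
    calc ‖e‖ + ‖S.ι (S.val e S.T)‖ ≤ Real.sqrt 2 * s := hsum
      _ ≤ Real.sqrt 2 * (Real.sqrt (1 + C ^ 2) * ‖w‖) := by
          exact mul_le_mul_of_nonneg_left hsle (by positivity)
      _ = Real.sqrt 2 * Real.sqrt (1 + C ^ 2) * ‖w‖ := by ring
  -- pass to the infimum
  have hcpos : (0:ℝ) < Real.sqrt 2 * Real.sqrt (1 + C ^ 2) := by positivity
  have hinf : (‖e‖ + ‖S.ι (S.val e S.T)‖) / (Real.sqrt 2 * Real.sqrt (1 + C ^ 2))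
      ≤ ⨅ vd : Wd, ‖y - (vd : W)‖ := by
    refine le_ciInf fun vd => ?_
    rw [div_le_iff₀ hcpos]
    calc ‖e‖ + ‖S.ι (S.val e S.T)‖
        ≤ Real.sqrt 2 * Real.sqrt (1 + C ^ 2) * ‖y - (vd : W)‖ := hbound vd
      _ = ‖y - (vd : W)‖ * (Real.sqrt 2 * Real.sqrt (1 + C ^ 2)) := by ring
  rw [div_le_iff₀ hcpos] at hinf
  calc ‖y - yd‖ + ‖S.ι (S.val (y - yd) S.T)‖
      = ‖e‖ + ‖S.ι (S.val e S.T)‖ := by rw [he]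
    _ ≤ (⨅ vd : Wd, ‖y - (vd : W)‖) * (Real.sqrt 2 * Real.sqrt (1 + C ^ 2)) := hinf
    _ = Real.sqrt 2 * Real.sqrt (1 + C ^ 2) * ⨅ vd : Wd, ‖y - (vd : W)‖ := by ring
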